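/- Fix k ∈ ℤ/ℓ with k invertible (k ≠ 0). If two voltage assignments α, β : F_q^⊠ → ℤ/ℓ satisfy θ^α_{a,k} = θ^β_{a,k} for all a ∈ F_q, then α = β. -/

import Mathlib

private lemma pow_val_add' {n : ℕ} [NeZero n] {ζ : ℂ} (hζ : ζ ^ n = 1) (a b : ZMod n) :
    ζ ^ (a + b).val = ζ ^ a.val * ζ ^ b.val := by
  rw [← pow_add, ZMod.val_add]
  conv_rhs => rw [← Nat.mod_add_div (a.val + b.val) n]
  rw [pow_add, pow_mul, hζ, one_pow, mul_one]

private lemma ortho' (p : ℕ) [Fact p.Prime]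
    (F : Type*) [Field F] [Fintype F] [DecidableEq F] [Algebra (ZMod p) F] (t : F) :
    ∑ a : F, Complex.exp (2 * Real.pi * Complex.I / p) ^ (Algebra.trace (ZMod p) F (a * t)).val
      = if t = 0 then (Fintype.card F : ℂ) else 0 := by
  haveI : NeZero p := ⟨(Fact.out : p.Prime).ne_zero⟩
  set ζ := Complex.exp (2 * Real.pi * Complex.I / p) with hζdef
  have hprim : IsPrimitiveRoot ζ p := Complex.isPrimitiveRoot_exp p (NeZero.ne p)
  have hζp : ζ ^ p = 1 := hprim.pow_eq_one
  split_ifs with ht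
  · simp [ht]
  · -- nondegeneracy
    haveI : FiniteDimensional (ZMod p) F := Module.Finite.of_finite
    have htr := (traceForm_nondegenerate (ZMod p) F).1 t
    simp_rw [Algebra.traceForm_apply] at htr
    have hb : ∃ b : F, Algebra.trace (ZMod p) F (t * b) ≠ 0 := by
      by_contra! hf; exact ht (htr hf)
    obtain ⟨b, hb⟩ := hb
    set S := ∑ a : F, ζ ^ (Algebra.trace (ZMod p) F (a * t)).val with hS
    have key : ζ ^ (Algebra.trace (ZMod p) F (b * t)).val * S = S := by
      rw [hS, Finset.mul_sum]
      rw [← Equiv.sum_comp (Equiv.addLeft b) (fun a => ζ ^ (Algebra.trace (ZMod p) F (a * t)).val)]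
      refine Finset.sum_congr rfl fun a _ => ?_
      have harg : (Equiv.addLeft b) a * t = b * t + a * t := by
        simp only [Equiv.coe_addLeft]; ring
      rw [harg, map_add, pow_val_add' hζp]
    have hne : ζ ^ (Algebra.trace (ZMod p) F (b * t)).val ≠ 1 := by
      intro h1
      have hv : (Algebra.trace (ZMod p) F (b * t)).val ≠ 0 := by
        intro h0
        apply hb
        rw [mul_comm]
        exact (ZMod.val_eq_zero _).mp h0
      exact hprim.pow_ne_one_of_pos_of_lt hv (ZMod.val_lt _) h1
    have := sub_eq_zero.mpr key
    rw [← sub_one_mul] at this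
    rcases mul_eq_zero.mp this with h | h
    · exact absurd (sub_eq_zero.mp h) hne
    · exact h

theorem voltage_determined_by_eigenvalues
    (p ℓ : ℕ) [Fact p.Prime] [Fact ℓ.Prime] (hpl : ℓ ≠ p)
    (F : Type*) [Field F] [Fintype F] [DecidableEq F] [Algebra (ZMod p) F]
    (h4 : Fintype.card F % 4 = 1)
    (α β : F → ZMod ℓ)
    (hαodd : ∀ s : F, s ≠ 0 → (∃ z : F, z ^ 2 = s) → α (-s) = -α s)
    (hβodd : ∀ s : F, s ≠ 0 → (∃ z : F, z ^ 2 = s) → β (-s) = -β s)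
    (k : ZMod ℓ) (hk : k ≠ 0)
    (heq : ∀ a : F,
      (∑ s ∈ Finset.univ.filter (fun s : F => s ≠ 0 ∧ ∃ z : F, z ^ 2 = s),
        Complex.exp (2 * Real.pi * Complex.I / p) ^ (Algebra.trace (ZMod p) F (a * s)).val
          * Complex.exp (2 * Real.pi * Complex.I / ℓ) ^ (k * α s).val)
      = ∑ s ∈ Finset.univ.filter (fun s : F => s ≠ 0 ∧ ∃ z : F, z ^ 2 = s),
        Complex.exp (2 * Real.pi * Complex.I / p) ^ (Algebra.trace (ZMod p) F (a * s)).val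
          * Complex.exp (2 * Real.pi * Complex.I / ℓ) ^ (k * β s).val) :
    ∀ s : F, s ≠ 0 → (∃ z : F, z ^ 2 = s) → α s = β s := by
  haveI : NeZero p := ⟨(Fact.out : p.Prime).ne_zero⟩
  haveI : NeZero ℓ := ⟨(Fact.out : ℓ.Prime).ne_zero⟩
  intro s₀ hs₀ hsq₀
  set ζp := Complex.exp (2 * Real.pi * Complex.I / p) with hζp
  set ζl := Complex.exp (2 * Real.pi * Complex.I / ℓ) with hζl
  have hprimp : IsPrimitiveRoot ζp p := Complex.isPrimitiveRoot_exp p (NeZero.ne p)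
  have hpp : ζp ^ p = 1 := hprimp.pow_eq_one
  have hpriml : IsPrimitiveRoot ζl ℓ := Complex.isPrimitiveRoot_exp ℓ (NeZero.ne ℓ)
  set T := Finset.univ.filter (fun s : F => s ≠ 0 ∧ ∃ z : F, z ^ 2 = s) with hT
  have hmem : s₀ ∈ T := by simp [hT, hs₀, hsq₀]
  -- key inversion, for any function γ
  have inv : ∀ γ : F → ZMod ℓ,
      ∑ a : F, ζp ^ (Algebra.trace (ZMod p) F (a * (-s₀))).val *
        ∑ s ∈ T, ζp ^ (Algebra.trace (ZMod p) F (a * s)).val * ζl ^ (k * γ s).val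
      = (Fintype.card F : ℂ) * ζl ^ (k * γ s₀).val := by
    intro γ
    have : ∀ a : F, ζp ^ (Algebra.trace (ZMod p) F (a * (-s₀))).val *
        ∑ s ∈ T, ζp ^ (Algebra.trace (ZMod p) F (a * s)).val * ζl ^ (k * γ s).val
        = ∑ s ∈ T, ζp ^ (Algebra.trace (ZMod p) F (a * (s - s₀))).val * ζl ^ (k * γ s).val := by
      intro a
      rw [Finset.mul_sum]
      refine Finset.sum_congr rfl fun s _ => ?_
      have h1 : Algebra.trace (ZMod p) F (a * (s - s₀))
          = Algebra.trace (ZMod p) F (a * (-s₀)) + Algebra.trace (ZMod p) F (a * s) := by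
        rw [← map_add]; ring_nf
      rw [h1, pow_val_add' hpp]; ring
    simp_rw [this]
    rw [Finset.sum_comm]
    have : ∀ s ∈ T,
        ∑ a : F, ζp ^ (Algebra.trace (ZMod p) F (a * (s - s₀))).val * ζl ^ (k * γ s).val
        = (if s - s₀ = 0 then (Fintype.card F : ℂ) else 0) * ζl ^ (k * γ s).val := by
      intro s _
      rw [← Finset.sum_mul, ortho' p F (s - s₀)]
    rw [Finset.sum_congr rfl this]
    rw [Finset.sum_eq_single s₀]
    · simp
    · intro s _ hne
      rw [if_neg (by simpa [sub_eq_zero] using hne), zero_mul]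
    · intro h; exact absurd hmem h
  have h2 : (Fintype.card F : ℂ) * ζl ^ (k * α s₀).val
      = (Fintype.card F : ℂ) * ζl ^ (k * β s₀).val := by
    rw [← inv α, ← inv β]
    exact Finset.sum_congr rfl fun a _ => by rw [heq a]
  have hqne : (Fintype.card F : ℂ) ≠ 0 := by
    exact_mod_cast Fintype.card_ne_zero
  have h3 : ζl ^ (k * α s₀).val = ζl ^ (k * β s₀).val := mul_left_cancel₀ hqne h2
  have h4' : (k * α s₀).val = (k * β s₀).val :=
    hpriml.pow_inj (ZMod.val_lt _) (ZMod.val_lt _) h3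
  have h5 : k * α s₀ = k * β s₀ := ZMod.val_injective ℓ h4'
  exact mul_left_cancel₀ hk h5
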